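/- For all integers n ≥ 3, one has B((n−1)/2, 1/2)² ≥ 1/(e·(n−1)), where B is the Beta function and e is Euler's number. -/

import Mathlib

/-- The Beta function `B(a,b) = ∫_0^1 t^{a-1} (1-t)^{b-1} dt`. -/
noncomputable def betaFn (a b : ℝ) : ℝ :=
  ∫ t in (0:ℝ)..1, t ^ (a - 1) * (1 - t) ^ (b - 1)

set_option maxHeartbeats 1000000 in
open MeasureTheory intervalIntegral in
/-- For all integers `n ≥ 3`, `B((n−1)/2, 1/2)² ≥ 1/(e·(n−1))`. -/
theorem betaFn_sq_ge (n : ℕ) (hn : 3 ≤ n) :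
    betaFn (((n:ℝ) - 1) / 2) (1 / 2) ^ 2 ≥ 1 / (Real.exp 1 * ((n:ℝ) - 1)) := by
  have hn' : (3:ℝ) ≤ (n:ℝ) := by exact_mod_cast hn
  set a : ℝ := ((n:ℝ) - 1) / 2 with ha_def
  have ha1 : 1 ≤ a := by rw [ha_def]; linarith
  have ha0 : (0:ℝ) < a := by linarith
  set c : ℝ := 1 - 1/a with hc_def
  have hc0 : 0 ≤ c := by
    have : 1/a ≤ 1 := by rw [div_le_one ha0]; linarith
    simp only [hc_def]; linarith
  have hc1 : c ≤ 1 := by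
    have : 0 < 1/a := by positivity
    simp only [hc_def]; linarith
  have h1c : 1 - c = 1/a := by simp [hc_def]
  set r : ℝ := (1:ℝ)/2 - 1 with hr_def
  set f : ℝ → ℝ := fun t => t ^ (a - 1) * (1 - t) ^ r with hf_def
  -- integrability of g t = (1-t)^r on any subinterval of [0,1]
  have hg : ∀ u v : ℝ, IntervalIntegrable (fun t : ℝ => (1 - t) ^ r) volume u v := by
    intro u v
    have := (intervalIntegral.intervalIntegrable_rpow'
      (a := 1 - u) (b := 1 - v) (r := r) (by rw [hr_def]; norm_num)).comp_sub_left 1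
    simpa using this
  -- integrability of f on [0,1]
  have hf01 : IntervalIntegrable f volume 0 1 := by
    apply (hg 0 1).mono_fun
    · exact ((measurable_id.pow_const (a-1)).mul
        ((measurable_const.sub measurable_id).pow_const r)).aestronglyMeasurable
    · rw [Filter.EventuallyLE, ae_restrict_iff' measurableSet_uIoc]
      filter_upwards with t ht
      rw [Set.uIoc_of_le (by norm_num : (0:ℝ) ≤ 1)] at ht
      have ht0 : 0 < t := ht.1
      have ht1 : t ≤ 1 := ht.2
      have h1 : (0:ℝ) ≤ (1 - t) ^ r := Real.rpow_nonneg (by linarith) _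
      have h2 : t ^ (a - 1) ≤ 1 := Real.rpow_le_one ht0.le ht1 (by linarith)
      have h3 : (0:ℝ) ≤ t ^ (a - 1) := Real.rpow_nonneg ht0.le _
      simp only [hf_def, Real.norm_eq_abs, abs_of_nonneg (mul_nonneg h3 h1), abs_of_nonneg h1]
      nlinarith
  have hf0c : IntervalIntegrable f volume 0 c := by
    apply hf01.mono_set
    rw [Set.uIcc_of_le hc0, Set.uIcc_of_le (by norm_num : (0:ℝ) ≤ 1)]
    exact Set.Icc_subset_Icc le_rfl hc1
  have hfc1 : IntervalIntegrable f volume c 1 := by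
    apply hf01.mono_set
    rw [Set.uIcc_of_le hc1, Set.uIcc_of_le (by norm_num : (0:ℝ) ≤ 1)]
    exact Set.Icc_subset_Icc hc0 le_rfl
  -- the integral of the constant-lower-bounded tail
  have htail : ∫ t in c..1, c ^ (a-1) * (1 - t) ^ r
      = c ^ (a-1) * (2 * (1/a) ^ ((1:ℝ)/2)) := by
    rw [intervalIntegral.integral_const_mul]
    congr 1
    have hcomp : (∫ t in c..1, (1 - t) ^ r) = ∫ u in (1-(1:ℝ))..(1-c), u ^ r :=
      intervalIntegral.integral_comp_sub_left (fun u => u ^ r) 1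
    rw [hcomp]
    rw [integral_rpow (Or.inl (by rw [hr_def]; norm_num))]
    rw [h1c, hr_def]
    norm_num
    ring
  -- pointwise bound on the tail
  have hmono : ∫ t in c..1, c ^ (a-1) * (1 - t) ^ r ≤ ∫ t in c..1, f t := by
    apply intervalIntegral.integral_mono_on hc1 ((hg c 1).const_mul _) hfc1
    intro t ht
    have h1 : (0:ℝ) ≤ (1 - t) ^ r := Real.rpow_nonneg (by linarith [ht.2]) _
    have h2 : c ^ (a-1) ≤ t ^ (a-1) := Real.rpow_le_rpow hc0 ht.1 (by linarith)
    exact mul_le_mul_of_nonneg_right h2 h1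
  -- the head is nonnegative
  have hhead : 0 ≤ ∫ t in (0:ℝ)..c, f t := by
    apply intervalIntegral.integral_nonneg hc0
    intro u hu
    exact mul_nonneg (Real.rpow_nonneg hu.1 _)
      (Real.rpow_nonneg (by linarith [hu.2, hc1]) _)
  -- lower bound on c^(a-1)
  have hK : Real.exp (-1) ≤ c ^ (a-1) := by
    rcases eq_or_lt_of_le ha1 with h | h
    · rw [← h]
      simp only [sub_self, Real.rpow_zero]
      exact Real.exp_le_one_iff.mpr (by norm_num)
    · have hb : 0 < a - 1 := by linarith
      have hcpos : 0 < c := by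
        rw [hc_def]
        have : 1/a < 1 := by rw [div_lt_one ha0]; linarith
        linarith
      rw [Real.rpow_def_of_pos hcpos]
      apply Real.exp_le_exp.mpr
      have hlog : 1 - c⁻¹ ≤ Real.log c := Real.one_sub_inv_le_log_of_pos hcpos
      have hcinv : c⁻¹ = a / (a - 1) := by
        rw [hc_def]; field_simp
      have : -(1/(a-1)) ≤ Real.log c := by
        rw [hcinv] at hlog
        have : 1 - a/(a-1) = -(1/(a-1)) := by field_simp; ring
        linarith [hlog, this.symm.le, this.le]
      have h5 : (a-1) * (-(1/(a-1))) ≤ (a-1) * Real.log c :=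
        mul_le_mul_of_nonneg_left this hb.le
      have h6 : (a-1) * (-(1/(a-1))) = -1 := by field_simp
      nlinarith [h5, h6]
  -- put it together
  set S : ℝ := (1/a) ^ ((1:ℝ)/2) with hS_def
  have hS0 : 0 ≤ S := Real.rpow_nonneg (by positivity) _
  have hS2 : S ^ 2 = 1/a := by
    rw [hS_def, ← Real.rpow_natCast ((1/a) ^ ((1:ℝ)/2)) 2, ← Real.rpow_mul (by positivity)]
    norm_num
  have key : 2 * Real.exp (-1) * S ≤ betaFn a (1/2) := by
    have hsplit : betaFn a (1/2) = (∫ t in (0:ℝ)..c, f t) + ∫ t in c..1, f t := by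
      rw [betaFn, ← intervalIntegral.integral_add_adjacent_intervals hf0c hfc1]
    have : c ^ (a-1) * (2 * S) ≤ ∫ t in c..1, f t := by
      rw [← htail]; exact hmono
    have h4 : 2 * Real.exp (-1) * S ≤ c ^ (a-1) * (2 * S) := by
      nlinarith [hK, hS0, Real.exp_pos (-1)]
    rw [hsplit]
    linarith
  have hbpos : 0 ≤ 2 * Real.exp (-1) * S := by positivity
  have hsq : (2 * Real.exp (-1) * S) ^ 2 ≤ betaFn a (1/2) ^ 2 :=
    pow_le_pow_left₀ hbpos key 2
  have hsqval : (2 * Real.exp (-1) * S) ^ 2 = 4 * Real.exp (-1) ^ 2 * (1/a) := by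
    rw [mul_pow, mul_pow, hS2]; ring
  have hE : (0:ℝ) < Real.exp 1 := Real.exp_pos 1
  have hE8 : Real.exp 1 ≤ 8 := by
    have := Real.exp_one_lt_d9
    linarith
  have hn2a : (n:ℝ) - 1 = 2 * a := by rw [ha_def]; ring
  rw [ge_iff_le, hn2a]
  have hEinv : Real.exp (-1) = (Real.exp 1)⁻¹ := Real.exp_neg 1
  set E : ℝ := Real.exp 1 with hE_def
  calc 1 / (E * (2 * a)) ≤ 4 * E⁻¹ ^ 2 * (1/a) := by
        rw [div_le_iff₀ (by positivity)]
        have heq : 4 * E⁻¹ ^ 2 * (1/a) * (E * (2*a)) = 8 / E := by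
          field_simp
          ring
        rw [heq, le_div_iff₀ hE]
        linarith
    _ = 4 * Real.exp (-1) ^ 2 * (1/a) := by rw [hEinv]
    _ ≤ betaFn a (1/2) ^ 2 := by rw [← hsqval]; exact hsq
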